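/- Fix an integer p ≥ 1, a probability space (Ω, F, P), square-integrable random variables ε₁, …, ε_p with E[ε_k] = 0 for all k, and a real p×p matrix A. Define X_i = Σ_{k=1}^p A_{ik}·ε_k. Suppose j is an index with A_{jk} = 0 for all k ≠ j and A_{jj} = 1 (so X_j = ε_j), that E[ε_j·ε_k] = 0 for all k ≠ j, and that E[ε_j²] > 0. Then for every i ≠ j, the residual X_i − (E[X_i·X_j]/E[X_j²])·X_j equals Σ_{k ≠ j} A_{ik}·ε_k pointwise almost surely; that is, regressing out the source variable X_j removes the disturbance ε_j from every remaining variable. -/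

import Mathlib

open MeasureTheory

/-- Residualization step of LiMIAM: in the linear model `X = A·ε`, if `j` is a source
node (row `j` of `A` is the `j`-th standard basis vector), the disturbances are
square-integrable, mean zero, `E[ε_j·ε_k] = 0` for `k ≠ j`, and `E[ε_j²] > 0`, then for
every `i ≠ j` the population least-squares residual of `X_i` regressed on `X_j` equals
`Σ_{k ≠ j} A_{ik}·ε_k` almost surely. -/
theorem stmt_10 {Ω : Type*} [MeasurableSpace Ω] (μ : Measure Ω)
    [IsProbabilityMeasure μ] (p : ℕ) (hp : 1 ≤ p)
    (ε : Fin p → Ω → ℝ) (hmeas : ∀ k, Measurable (ε k))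
    (hL2 : ∀ k, MemLp (ε k) 2 μ)
    (hmean : ∀ k, ∫ ω, ε k ω ∂μ = 0)
    (A : Matrix (Fin p) (Fin p) ℝ)
    (X : Fin p → Ω → ℝ) (hX : ∀ i, X i = fun ω => ∑ k, A i k * ε k ω)
    (j : Fin p) (hAjj : A j j = 1) (hAj : ∀ k, k ≠ j → A j k = 0)
    (horth : ∀ k, k ≠ j → ∫ ω, ε j ω * ε k ω ∂μ = 0)
    (hvar : 0 < ∫ ω, ε j ω ^ 2 ∂μ) :
    ∀ i : Fin p, i ≠ j →
      (fun ω => X i ω -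
          ((∫ ω', X i ω' * X j ω' ∂μ) / ∫ ω', X j ω' ^ 2 ∂μ) * X j ω)
        =ᵐ[μ] fun ω => ∑ k ∈ Finset.univ.erase j, A i k * ε k ω := by
  intro i hij
  have hXj : ∀ ω, X j ω = ε j ω := by
    intro ω
    rw [hX j]
    simp only
    rw [Finset.sum_eq_single j]
    · rw [hAjj, one_mul]
    · intro k _ hk; rw [hAj k hk, zero_mul]
    · simp
  have hint : ∀ k : Fin p, Integrable (fun ω => ε k ω * ε j ω) μ :=
    fun k => by
    have h : MemLp (ε k • ε j) 1 μ :=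
      (hL2 j).smul (hL2 k) (hpqr := ⟨by simp only [one_div, inv_one]; exact ENNReal.inv_two_add_inv_two⟩)
    exact h.integrable le_rfl
  have hXiXj : ∫ ω', X i ω' * X j ω' ∂μ = A i j * ∫ ω, ε j ω ^ 2 ∂μ := by
    have : (fun ω' => X i ω' * X j ω') = fun ω' => ∑ k, A i k * (ε k ω' * ε j ω') := by
      funext ω'
      rw [hX i, hXj ω']
      simp only
      rw [Finset.sum_mul]
      congr 1; funext k; ring
    rw [this, integral_finset_sum]
    · have : ∀ k : Fin p, ∫ ω', A i k * (ε k ω' * ε j ω') ∂μ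
          = A i k * ∫ ω', ε k ω' * ε j ω' ∂μ := fun k => integral_const_mul _ _
      simp_rw [this]
      rw [Finset.sum_eq_single j]
      · congr 1; apply integral_congr_ae; filter_upwards with ω; ring
      · intro k _ hk
        have : ∫ ω', ε k ω' * ε j ω' ∂μ = 0 := by
          rw [← horth k hk]; apply integral_congr_ae; filter_upwards with ω; ring
        rw [this, mul_zero]
      · simp
    · intro k _
      exact ((hint k).const_mul _)
  have hXj2 : ∫ ω', X j ω' ^ 2 ∂μ = ∫ ω, ε j ω ^ 2 ∂μ := by
    apply integral_congr_ae; filter_upwards with ω; rw [hXj ω]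
  have hcoef : (∫ ω', X i ω' * X j ω' ∂μ) / (∫ ω', X j ω' ^ 2 ∂μ) = A i j := by
    rw [hXiXj, hXj2, mul_div_assoc, div_self hvar.ne', mul_one]
  filter_upwards with ω
  rw [hcoef, hX i, hXj ω]
  simp only
  rw [← Finset.add_sum_erase _ _ (Finset.mem_univ j)]
  ring
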